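/- Let ψ : [0,∞) → [0,∞) be a sub-root function with unique fixed point r*, let b ≥ 1 and c ≥ 0. Then ψ_b(r) := ψ(br + c) is also a sub-root function, and its fixed point r*_b satisfies r*_b ≤ b·r* + 2c/b. -/

import Mathlib

/-- A function `ψ : [0,∞) → [0,∞)` is sub-root if it is nonnegative, nondecreasing,
and `r ↦ ψ(r)/√r` is nonincreasing for `r > 0`. -/
def SubRoot (ψ : ℝ → ℝ) : Prop :=
  (∀ r : ℝ, 0 ≤ r → 0 ≤ ψ r) ∧
  (∀ r s : ℝ, 0 ≤ r → r ≤ s → ψ r ≤ ψ s) ∧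
  (∀ r s : ℝ, 0 < r → r ≤ s → ψ s / Real.sqrt s ≤ ψ r / Real.sqrt r)

theorem stmt_3 (ψ : ℝ → ℝ) (hψ : SubRoot ψ) (rstar : ℝ) (hrstar_pos : 0 < rstar)
    (hfix : ψ rstar = rstar)
    (huniq : ∀ r : ℝ, 0 < r → ψ r = r → r = rstar)
    (b c : ℝ) (hb : 1 ≤ b) (hc : 0 ≤ c) :
    SubRoot (fun r => ψ (b * r + c)) ∧
      ∀ rb : ℝ, 0 < rb → ψ (b * rb + c) = rb → rb ≤ b * rstar + 2 * c / b := by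
  obtain ⟨hnn, hmono, hratio⟩ := hψ
  have hb0 : (0:ℝ) < b := lt_of_lt_of_le one_pos hb
  -- key: ψ t ≤ √t * √rstar for t ≥ rstar
  have key : ∀ t : ℝ, rstar ≤ t → ψ t ≤ Real.sqrt t * Real.sqrt rstar := by
    intro t ht
    have h := hratio rstar t hrstar_pos ht
    rw [hfix] at h
    have hst : (0:ℝ) < Real.sqrt t := Real.sqrt_pos.mpr (lt_of_lt_of_le hrstar_pos ht)
    have hrr : rstar / Real.sqrt rstar = Real.sqrt rstar := Real.div_sqrt
    rw [hrr] at h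
    calc ψ t = (ψ t / Real.sqrt t) * Real.sqrt t := by field_simp
    _ ≤ Real.sqrt rstar * Real.sqrt t := mul_le_mul_of_nonneg_right h hst.le
    _ = Real.sqrt t * Real.sqrt rstar := mul_comm _ _
  have hsub : SubRoot (fun r => ψ (b * r + c)) := by
    refine ⟨?_, ?_, ?_⟩
    · intro r hr
      exact hnn _ (by positivity)
    · intro r s hr hrs
      exact hmono _ _ (by positivity) (by nlinarith)
    · intro r s hr hrs
      simp only
      set R := b * r + c with hR
      set S := b * s + c with hS
      have hRpos : 0 < R := by positivity
      have hSpos : 0 < S := by nlinarith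
      have h1 : ψ S / Real.sqrt S ≤ ψ R / Real.sqrt R :=
        hratio R S hRpos (by nlinarith)
      have hsr : 0 < Real.sqrt r := Real.sqrt_pos.mpr hr
      have hss : 0 < Real.sqrt s := Real.sqrt_pos.mpr (lt_of_lt_of_le hr hrs)
      have hsR : 0 < Real.sqrt R := Real.sqrt_pos.mpr hRpos
      have hsS : 0 < Real.sqrt S := Real.sqrt_pos.mpr hSpos
      have h2 : Real.sqrt S * Real.sqrt r ≤ Real.sqrt R * Real.sqrt s := by
        rw [← Real.sqrt_mul hSpos.le, ← Real.sqrt_mul hRpos.le]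
        apply Real.sqrt_le_sqrt
        nlinarith
      have h1' : ψ S * Real.sqrt R ≤ ψ R * Real.sqrt S := by
        rw [div_le_div_iff₀ hsS hsR] at h1
        exact h1
      rw [div_le_div_iff₀ hss hsr]
      have hψS : 0 ≤ ψ S := hnn _ hSpos.le
      nlinarith [mul_le_mul_of_nonneg_left h2 hψS,
        mul_le_mul_of_nonneg_right h1' hss.le]
  refine ⟨hsub, ?_⟩
  obtain ⟨hnn', hmono', hratio'⟩ := hsub
  intro rb hrb hfixb
  set s := b * rstar + 2 * c / b with hs
  have hspos : 0 < s := by positivity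
  have hbs : b * s = b * b * rstar + 2 * c := by rw [hs]; field_simp
  have hbb : 1 ≤ b * b := by nlinarith
  have hbsc : rstar ≤ b * s + c := by nlinarith
  have h1 : ψ (b * s + c) ≤ Real.sqrt (b * s + c) * Real.sqrt rstar := key _ hbsc
  have h2 : Real.sqrt (b * s + c) * Real.sqrt rstar ≤ s := by
    rw [← Real.sqrt_mul (by nlinarith)]
    have hle : (b * s + c) * rstar ≤ s ^ 2 := by
      have hs2 : s ^ 2 = b * b * rstar * rstar + 4 * c * rstar + 4 * c * c / (b * b) := by
        rw [hs]; field_simp; ring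
      have h3 : b * s * rstar = (b * b * rstar + 2 * c) * rstar := by rw [hbs]
      nlinarith [div_nonneg (by positivity : (0:ℝ) ≤ 4 * c * c) (by positivity : (0:ℝ) ≤ b * b), mul_nonneg hc hrstar_pos.le]
    calc Real.sqrt ((b * s + c) * rstar) ≤ Real.sqrt (s ^ 2) := Real.sqrt_le_sqrt hle
    _ = s := Real.sqrt_sq hspos.le
  have hφs : ψ (b * s + c) ≤ s := le_trans h1 h2
  by_contra hcon
  push_neg at hcon
  have hrat := hratio' s rb hspos hcon.le
  simp only at hrat
  have hsrb : 0 < Real.sqrt rb := Real.sqrt_pos.mpr hrb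
  have hss' : 0 < Real.sqrt s := Real.sqrt_pos.mpr hspos
  have hbound : ψ (b * s + c) / Real.sqrt s ≤ Real.sqrt s := by
    rw [div_le_iff₀ hss']
    calc ψ (b * s + c) ≤ s := hφs
    _ = Real.sqrt s * Real.sqrt s := (Real.mul_self_sqrt hspos.le).symm
  have hfin := le_trans hrat hbound
  rw [hfixb, div_le_iff₀ hsrb] at hfin
  -- rb ≤ √s * √rb, rb = √rb * √rb, so √rb ≤ √s, so rb ≤ s
  have hrbeq : rb = Real.sqrt rb * Real.sqrt rb := (Real.mul_self_sqrt hrb.le).symm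
  have : Real.sqrt rb ≤ Real.sqrt s := by nlinarith
  have : rb ≤ s := by nlinarith [Real.mul_self_sqrt hspos.le]
  linarith
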